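/- Let π be a plane partition with at most m rows and largest entry at most n, with shape λ = sh(π), and let D = (d_{iℓ}) be the image of π under the descent-level-set map, i.e. d_{iℓ} = |{ j : π_{ij} = ℓ > π_{i+1,j} }|. Then for every k ∈ [1,m], λ_k equals the maximum over directed lattice paths Π from (k,1) to (m,n) (using steps (i,ℓ) → (i+1,ℓ) or (i,ℓ+1)) of the sum of d_{iℓ} over the points (i,ℓ) ∈ Π. -/

import Mathlib

open scoped BigOperators

/-- A plane partition: an ℕ-matrix (indexed from 0) with finitely many nonzero
entries, weakly decreasing along rows and columns. -/
structure PlanePartition where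
  entry : ℕ → ℕ → ℕ
  finite_support : (Function.support fun p : ℕ × ℕ => entry p.1 p.2).Finite
  row_dec : ∀ i j, entry i (j + 1) ≤ entry i j
  col_dec : ∀ i j, entry (i + 1) j ≤ entry i j

/-- `c_ℓ(π)`: the number of columns of `π` containing the entry `ℓ`. -/
noncomputable def colCount (π : PlanePartition) (ℓ : ℕ) : ℕ :=
  {j | ∃ i, π.entry i j = ℓ}.ncard

/-- `d_{iℓ}`: the number of columns `j` with `π_{ij} = ℓ > π_{i+1,j}` (row `i` indexed from 0,
`ℓ` an actual entry value). -/
noncomputable def dstat (π : PlanePartition) (i ℓ : ℕ) : ℕ :=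
  {j | π.entry i j = ℓ ∧ π.entry (i + 1) j < ℓ}.ncard

/-- `λ_k`: the number of positive entries in row `k` (indexed from 0) of `π`. -/
noncomputable def part (π : PlanePartition) (k : ℕ) : ℕ :=
  {j | 0 < π.entry k j}.ncard

/-- `π` has shape `λ` (with `λ : ℕ → ℕ` indexed from 0). -/
def HasShape (π : PlanePartition) (lam : ℕ → ℕ) : Prop :=
  ∀ k, part π k = lam k

/-- `λ` is an integer partition with at most `m` parts (indexed from 0). -/
def IsPartWithParts (m : ℕ) (lam : ℕ → ℕ) : Prop :=
  Antitone lam ∧ ∀ i, m ≤ i → lam i = 0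

/-- The dual Grothendieck polynomial
`g_λ(x_1,…,x_n) = Σ_{π : sh(π) = λ, entries ≤ n} ∏_i x_i^{c_i(π)}`. -/
noncomputable def dualG (lam : ℕ → ℕ) (n : ℕ) (x : Fin n → ℝ) : ℝ :=
  ∑' π : {π : PlanePartition // HasShape π lam ∧ ∀ i j, π.entry i j ≤ n},
    ∏ ℓ : Fin n, x ℓ ^ colCount π.1 (ℓ.1 + 1)

/-- A unit step of a directed lattice path. -/
def IsStep (a b : ℕ × ℕ) : Prop :=
  b = (a.1 + 1, a.2) ∨ b = (a.1, a.2 + 1)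

/-- `p` is a directed lattice path from `s` to `t`. -/
def IsDirPath (p : List (ℕ × ℕ)) (s t : ℕ × ℕ) : Prop :=
  p.head? = some s ∧ p.getLast? = some t ∧ p.Chain' IsStep

/-- The sum of the weights `W` along the path `p`. -/
def pathSum (W : ℕ → ℕ → ℕ) (p : List (ℕ × ℕ)) : ℕ :=
  (p.map fun a => W a.1 a.2).sum

/-- Last-passage time from `s` to `(m, n)` for the weight matrix `W` (1-indexed). -/
noncomputable def lpt (W : ℕ → ℕ → ℕ) (s : ℕ × ℕ) (m n : ℕ) : ℕ :=
  sSup {v | ∃ p, IsDirPath p s (m, n) ∧ v = pathSum W p}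

/-- Extend an `m × n` matrix (indexed from 0) to a 1-indexed matrix on `ℕ × ℕ`, zero outside. -/
def ext (m n : ℕ) (w : Fin m → Fin n → ℕ) : ℕ → ℕ → ℕ := fun i j =>
  if hi : i - 1 < m then if hj : j - 1 < n then w ⟨i - 1, hi⟩ ⟨j - 1, hj⟩ else 0 else 0

/-- Probability weight of a fixed `m × n` matrix of outcomes under independent geometric
entries: entry in column `ℓ` takes value `k` with probability `(1 - q_ℓ) q_ℓ^k`. -/
noncomputable def geomWt {m n : ℕ} (q : Fin n → ℝ) (w : Fin m → Fin n → ℕ) : ℝ :=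
  ∏ i : Fin m, ∏ ℓ : Fin n, (1 - q ℓ) * q ℓ ^ w i ℓ

/-- Probability of an event `E` for an `m × n` matrix of independent geometric entries
with column parameters `q`. -/
noncomputable def geomProb {m n : ℕ} (q : Fin n → ℝ) (E : Set (Fin m → Fin n → ℕ)) : ℝ :=
  ∑' w : E, geomWt q w.1

/-- The complete homogeneous symmetric polynomial `h_a(x_1,…,x_N)`: the sum of all
monomials of degree `a`. -/
noncomputable def hpoly (a N : ℕ) (x : Fin N → ℝ) : ℝ :=
  ∑ f ∈ Finset.univ.filter (fun f : Fin a → Fin N => ∀ i j, i ≤ j → f i ≤ f j),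
    ∏ t, x (f t)

/-- `h` with an integer index, vanishing for negative degrees. -/
noncomputable def hpolyZ (a : ℤ) (N : ℕ) (x : Fin N → ℝ) : ℝ :=
  if 0 ≤ a then hpoly a.toNat N x else 0

/-- The Schur polynomial of `λ` (at most `m` parts) via the Jacobi–Trudi determinant
`s_λ = det[h_{λ_i - i + j}]_{i,j=1}^m`. -/
noncomputable def schur (lam : ℕ → ℕ) (m N : ℕ) (x : Fin N → ℝ) : ℝ :=
  Matrix.det (Matrix.of fun i j : Fin m =>
    hpolyZ ((lam i.1 : ℤ) - (i.1 + 1) + (j.1 + 1)) N x)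

/-- The rectangular partition `(a^m)` as a function `ℕ → ℕ`. -/
def rectPart (a m : ℕ) : ℕ → ℕ := fun k => if k < m then a else 0

namespace Stmt2Aux

/-- The partial order relation implied by a nonempty sequence of unit steps. -/
def Rle (a b : ℕ × ℕ) : Prop := a.1 ≤ b.1 ∧ a.2 ≤ b.2 ∧ a.1 + a.2 < b.1 + b.2

instance : IsTrans (ℕ × ℕ) Rle :=
  ⟨fun _ _ _ hab hbc => ⟨hab.1.trans hbc.1, hab.2.1.trans hbc.2.1, hab.2.2.trans hbc.2.2⟩⟩

lemma isStep_Rle {a b : ℕ × ℕ} (h : IsStep a b) : Rle a b := by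
  rcases h with h | h <;> subst h <;> exact ⟨by simp, by simp, by simp⟩

lemma mem_of_getLast? {α : Type*} {l : List α} {a : α} (h : l.getLast? = some a) : a ∈ l := by
  have hne : l ≠ [] := by rintro rfl; simp at h
  rw [List.getLast?_eq_getLast_of_ne_nil hne] at h
  obtain rfl : l.getLast hne = a := by injection h
  exact List.getLast_mem hne

lemma dirPath_pairwise {p : List (ℕ × ℕ)} {s t : ℕ × ℕ} (h : IsDirPath p s t) :
    p.Pairwise Rle :=
  List.isChain_iff_pairwise.mp (List.IsChain.imp (fun {_ _} hab => isStep_Rle hab) h.2.2)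

lemma dirPath_nodup {p : List (ℕ × ℕ)} {s t : ℕ × ℕ} (h : IsDirPath p s t) :
    p.Nodup :=
  (dirPath_pairwise h).imp fun hab => by
    rintro rfl; exact absurd hab.2.2 (by omega)

lemma dirPath_cons {p : List (ℕ × ℕ)} {s t : ℕ × ℕ} (h : IsDirPath p s t) :
    ∃ rest, p = s :: rest := by
  obtain ⟨h1, -, -⟩ := h
  cases p with
  | nil => simp at h1
  | cons a l =>
    refine ⟨l, ?_⟩
    simp only [List.head?_cons, Option.some.injEq] at h1
    rw [h1]

lemma dirPath_mem_ge {p : List (ℕ × ℕ)} {s t a : ℕ × ℕ} (h : IsDirPath p s t)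
    (ha : a ∈ p) : s.1 ≤ a.1 ∧ s.2 ≤ a.2 := by
  obtain ⟨rest, rfl⟩ := dirPath_cons h
  rcases List.mem_cons.mp ha with rfl | ha
  · exact ⟨le_refl _, le_refl _⟩
  · have := (List.pairwise_cons.mp (dirPath_pairwise h)).1 a ha
    exact ⟨this.1, this.2.1⟩

lemma dirPath_last_mem {p : List (ℕ × ℕ)} {s t : ℕ × ℕ} (h : IsDirPath p s t) :
    t ∈ p := mem_of_getLast? h.2.1

/-- Existence of a directed path between componentwise-ordered points. -/
lemma exists_dirPath_aux : ∀ N (s t : ℕ × ℕ), s.1 ≤ t.1 → s.2 ≤ t.2 →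
    (t.1 - s.1) + (t.2 - s.2) = N → ∃ p, IsDirPath p s t := by
  intro N
  induction N with
  | zero =>
    intro s t h1 h2 hN
    obtain rfl : s = t := Prod.ext (by omega) (by omega)
    exact ⟨[s], by simp [IsDirPath, List.Chain']⟩
  | succ N ih =>
    intro s t h1 h2 hN
    rcases lt_or_eq_of_le h1 with hlt | heq
    · obtain ⟨p, hp⟩ := ih (s.1 + 1, s.2) t (by omega) h2 (by simp only []; omega)
      obtain ⟨rest, rfl⟩ := dirPath_cons hp
      refine ⟨s :: (s.1 + 1, s.2) :: rest, by simp [IsDirPath], ?_, ?_⟩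
      · rw [List.getLast?_cons_cons]; exact hp.2.1
      · exact List.isChain_cons.mpr ⟨by intro y hy; simp at hy; subst hy; exact Or.inl rfl, hp.2.2⟩
    · have hlt2 : s.2 < t.2 := by omega
      obtain ⟨p, hp⟩ := ih (s.1, s.2 + 1) t (by omega) (by omega) (by simp only []; omega)
      obtain ⟨rest, rfl⟩ := dirPath_cons hp
      refine ⟨s :: (s.1, s.2 + 1) :: rest, by simp [IsDirPath], ?_, ?_⟩
      · rw [List.getLast?_cons_cons]; exact hp.2.1
      · exact List.isChain_cons.mpr ⟨by intro y hy; simp at hy; subst hy; exact Or.inr rfl, hp.2.2⟩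

lemma exists_dirPath {s t : ℕ × ℕ} (h1 : s.1 ≤ t.1) (h2 : s.2 ≤ t.2) :
    ∃ p, IsDirPath p s t :=
  exists_dirPath_aux _ s t h1 h2 rfl

/-- Concatenation of directed paths. -/
lemma dirPath_append {p q : List (ℕ × ℕ)} {s a t : ℕ × ℕ}
    (hp : IsDirPath p s a) (hq : IsDirPath q a t) :
    IsDirPath (p ++ q.tail) s t ∧ ∀ x ∈ q, x ∈ p ++ q.tail := by
  obtain ⟨q', rfl⟩ := dirPath_cons hq
  have htail : (a :: q').tail = q' := rfl
  rw [htail]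
  cases q' with
  | nil =>
    obtain rfl : a = t := by
      have h := hq.2.1
      simp only [List.getLast?_singleton, Option.some.injEq] at h
      exact h
    simp only [List.append_nil]
    refine ⟨hp, ?_⟩
    intro x hx
    simp only [List.mem_singleton] at hx
    subst hx
    exact dirPath_last_mem hp
  | cons b q'' =>
    constructor
    · obtain ⟨p', hp'⟩ := dirPath_cons hp
      refine ⟨?_, ?_, ?_⟩
      · rw [hp']; simp
      · rw [List.getLast?_append_of_ne_nil _ (by simp)]
        have h := hq.2.1; rwa [List.getLast?_cons_cons] at h
      · refine List.IsChain.append hp.2.2 (List.isChain_cons_cons.mp hq.2.2).2 ?_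
        intro x hx y hy
        have hx' : x = a := by
          have h := hp.2.1
          rw [Option.mem_def] at hx
          rw [hx] at h; injection h
        have hy' : y = b := by
          rw [Option.mem_def, List.head?_cons] at hy
          injection hy with h; exact h.symm
        subst hx'; subst hy'
        exact (List.isChain_cons_cons.mp hq.2.2).1
    · intro x hx
      rcases List.mem_cons.mp hx with rfl | hx
      · exact List.mem_append.mpr (Or.inl (dirPath_last_mem hp))
      · exact List.mem_append.mpr (Or.inr hx)

/-- A directed path through a monotone sequence of points. -/
lemma exists_path_through (q : ℕ → ℕ × ℕ) (T : ℕ)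
    (mono : ∀ t < T, (q t).1 ≤ (q (t + 1)).1 ∧ (q t).2 ≤ (q (t + 1)).2) :
    ∃ p, IsDirPath p (q 0) (q T) ∧ ∀ t ≤ T, q t ∈ p := by
  induction T with
  | zero => exact ⟨[q 0], by simp [IsDirPath, List.Chain'], by intro t ht; interval_cases t; simp⟩
  | succ T ih =>
    obtain ⟨p, hp, hmem⟩ := ih (fun t ht => mono t (by omega))
    obtain ⟨r, hr⟩ := exists_dirPath (mono T (by omega)).1 (mono T (by omega)).2
    obtain ⟨hpath, hmem2⟩ := dirPath_append hp hr
    refine ⟨p ++ r.tail, hpath, ?_⟩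
    intro t ht
    rcases Nat.lt_succ_iff_lt_or_eq.mp (Nat.lt_succ_of_le ht) with ht' | rfl
    · exact List.mem_append.mpr (Or.inl (hmem t (by omega)))
    · exact hmem2 _ (dirPath_last_mem hr)



/-- The set of descents counted by `dstat` at a 1-indexed point `a`. -/
def dset (π : PlanePartition) (a : ℕ × ℕ) : Set ℕ :=
  {j | π.entry (a.1 - 1) j = a.2 ∧ π.entry a.1 j < a.2}

/-- Properties of the largest row index where column `c` still has an entry `≥ ℓ`. -/
lemma sSup_spec (π : PlanePartition) {m c i₀ ℓ : ℕ}
    (hrows : ∀ i j, m ≤ i → π.entry i j = 0)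
    (h1 : 1 ≤ ℓ) (h2 : ℓ ≤ π.entry i₀ c) :
    i₀ ≤ sSup {i | ℓ ≤ π.entry i c} ∧ sSup {i | ℓ ≤ π.entry i c} < m ∧
      ℓ ≤ π.entry (sSup {i | ℓ ≤ π.entry i c}) c ∧
      π.entry (sSup {i | ℓ ≤ π.entry i c} + 1) c < ℓ := by
  have hbdd : BddAbove {i | ℓ ≤ π.entry i c} := by
    refine ⟨m, fun x hx => ?_⟩
    by_contra hcon
    push_neg at hcon
    have h0 := hrows x c (by omega)
    have hx' : ℓ ≤ π.entry x c := hx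
    omega
  have hne : i₀ ∈ {i | ℓ ≤ π.entry i c} := h2
  have hmem : sSup {i | ℓ ≤ π.entry i c} ∈ {i | ℓ ≤ π.entry i c} :=
    Nat.sSup_mem ⟨_, hne⟩ hbdd
  have hval : ℓ ≤ π.entry (sSup {i | ℓ ≤ π.entry i c}) c := hmem
  have hge : i₀ ≤ sSup {i | ℓ ≤ π.entry i c} := le_csSup hbdd hne
  have hsucc : π.entry (sSup {i | ℓ ≤ π.entry i c} + 1) c < ℓ := by
    by_contra hcon
    push_neg at hcon
    have : sSup {i | ℓ ≤ π.entry i c} + 1 ≤ sSup {i | ℓ ≤ π.entry i c} :=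
      le_csSup hbdd hcon
    omega
  have hlt : sSup {i | ℓ ≤ π.entry i c} < m := by
    by_contra hcon
    push_neg at hcon
    have h0 := hrows (sSup {i | ℓ ≤ π.entry i c}) c hcon
    omega
  exact ⟨hge, hlt, hval, hsucc⟩

/-- The greedy sequence of descent points. -/
noncomputable def seqQ (π : PlanePartition) (k L : ℕ) : ℕ → ℕ × ℕ := fun t =>
  Nat.rec ((k, 1) : ℕ × ℕ)
    (fun t' q =>
      (sSup {i | q.2 ≤ π.entry i (L - 1 - t')} + 1,
        π.entry (sSup {i | q.2 ≤ π.entry i (L - 1 - t')}) (L - 1 - t'))) t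

lemma seqQ_zero (π : PlanePartition) (k L : ℕ) : seqQ π k L 0 = (k, 1) := rfl

lemma seqQ_succ (π : PlanePartition) (k L t : ℕ) :
    seqQ π k L (t + 1) =
      (sSup {i | (seqQ π k L t).2 ≤ π.entry i (L - 1 - t)} + 1,
        π.entry (sSup {i | (seqQ π k L t).2 ≤ π.entry i (L - 1 - t)}) (L - 1 - t)) := rfl

end Stmt2Aux


open Stmt2Aux
/-- for `π` a plane partition with at most `m` rows, entries at most `n`,
of shape `λ`, and any `k ∈ [1, m]`, `λ_k` is the maximum over directed paths from
`(k, 1)` to `(m, n)` of the sum of `d_{iℓ}` along the path (1-indexed coordinates). -/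
theorem stmt2 (π : PlanePartition) (m n : ℕ) (lam : ℕ → ℕ)
    (hrows : ∀ i j, m ≤ i → π.entry i j = 0)
    (hent : ∀ i j, π.entry i j ≤ n)
    (hshape : HasShape π lam)
    (k : ℕ) (hk1 : 1 ≤ k) (hkm : k ≤ m) :
    lam (k - 1) =
      sSup {v | ∃ p, IsDirPath p (k, 1) (m, n) ∧
        v = pathSum (fun i ℓ => dstat π (i - 1) ℓ) p} := by
  classical
  have hanti_row : ∀ i, Antitone (π.entry i) :=
    fun i => antitone_nat_of_succ_le (π.row_dec i)
  have hanti_col : ∀ j, Antitone (fun i => π.entry i j) :=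
    fun j => antitone_nat_of_succ_le (fun i => π.col_dec i j)
  set S0 : Set ℕ := {j | 0 < π.entry (k - 1) j} with hS0
  have hS0fin : S0.Finite := by
    apply Set.Finite.subset (π.finite_support.image Prod.snd)
    rintro j hj
    exact ⟨(k - 1, j), Function.mem_support.mpr (show 0 < π.entry (k - 1) j from hj).ne', rfl⟩
  set L := lam (k - 1) with hLdef
  have hlam_eq : L = S0.ncard := by rw [hLdef, ← hshape (k - 1)]; rfl
  have hpos : ∀ j, j < L → 0 < π.entry (k - 1) j := by
    intro j hj
    by_contra hcon
    push_neg at hcon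
    have hsub : S0 ⊆ Set.Iio j := by
      intro x hx
      rcases lt_or_ge x j with h | h
      · exact h
      · exfalso
        have hle := hanti_row (k - 1) h
        have hx' : 0 < π.entry (k - 1) x := hx
        omega
    have hcard := Set.ncard_le_ncard hsub (Set.finite_Iio j)
    rw [← Finset.coe_range, Set.ncard_coe_finset, Finset.card_range] at hcard
    omega
  have hdstat : ∀ a : ℕ × ℕ, 1 ≤ a.1 → dstat π (a.1 - 1) a.2 = (dset π a).ncard := by
    intro a ha
    rw [dstat, Nat.sub_add_cancel ha]
    rfl
  have hSsub : ∀ a : ℕ × ℕ, k ≤ a.1 → 1 ≤ a.2 → dset π a ⊆ S0 := by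
    rintro a h1 h2 j ⟨e1, e2⟩
    have hc : π.entry (a.1 - 1) j ≤ π.entry (k - 1) j := hanti_col j (by omega)
    show 0 < π.entry (k - 1) j
    omega
  have hSfin : ∀ a : ℕ × ℕ, k ≤ a.1 → 1 ≤ a.2 → (dset π a).Finite :=
    fun a h1 h2 => hS0fin.subset (hSsub a h1 h2)
  have hdisj : ∀ a b : ℕ × ℕ, Rle a b → Disjoint (dset π a) (dset π b) := by
    intro a b hr
    rw [Set.disjoint_left]
    rintro j ⟨e1, e2⟩ ⟨f1, f2⟩
    obtain ⟨hr1, hr2, hr3⟩ := hr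
    have hcc : π.entry (b.1 - 1) j ≤ π.entry (a.1 - 1) j := hanti_col j (by omega)
    have heq : a.2 = b.2 := by omega
    have hlt : a.1 < b.1 := by omega
    have hcc2 : π.entry (b.1 - 1) j ≤ π.entry a.1 j := hanti_col j (by omega)
    omega
  -- Upper bound: every path sum is at most L.
  have hub : ∀ p, IsDirPath p (k, 1) (m, n) →
      pathSum (fun i ℓ => dstat π (i - 1) ℓ) p ≤ L := by
    intro p hp
    have hmemge : ∀ a ∈ p, k ≤ a.1 ∧ 1 ≤ a.2 := fun a ha => dirPath_mem_ge hp ha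
    have hnd := dirPath_nodup hp
    have hpw := dirPath_pairwise hp
    set T0 : Finset ℕ := hS0fin.toFinset with hT0
    set Sf : ℕ × ℕ → Finset ℕ :=
      fun a => T0.filter fun j => π.entry (a.1 - 1) j = a.2 ∧ π.entry a.1 j < a.2 with hSf
    have hcoe : ∀ a : ℕ × ℕ, k ≤ a.1 → 1 ≤ a.2 → (Sf a : Set ℕ) = dset π a := by
      intro a h1 h2
      ext j
      constructor
      · intro hj
        exact (Finset.mem_filter.mp hj).2
      · intro hj
        exact Finset.mem_coe.mpr (Finset.mem_filter.mpr
          ⟨hS0fin.mem_toFinset.mpr (hSsub a h1 h2 hj), hj⟩)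
    have hcard : ∀ a : ℕ × ℕ, k ≤ a.1 → 1 ≤ a.2 →
        dstat π (a.1 - 1) a.2 = (Sf a).card := by
      intro a h1 h2
      rw [hdstat a (by omega), ← hcoe a h1 h2, Set.ncard_coe_finset]
    have hpw' : p.Pairwise fun a b => Disjoint (dset π a) (dset π b) :=
      hpw.imp fun h => hdisj _ _ h
    have hdisjF : ∀ x ∈ p.toFinset, ∀ y ∈ p.toFinset, x ≠ y → Disjoint (Sf x) (Sf y) := by
      intro x hx y hy hxy
      rw [List.mem_toFinset] at hx hy
      have hSxy : Disjoint (dset π x) (dset π y) :=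
        by haveI : Std.Symm (fun a b : ℕ × ℕ => Disjoint (dset π a) (dset π b)) :=
             ⟨fun a b h => h.symm⟩
           exact hpw'.forall hx hy hxy
      rw [← Finset.disjoint_coe, hcoe x (hmemge x hx).1 (hmemge x hx).2,
        hcoe y (hmemge y hy).1 (hmemge y hy).2]
      exact hSxy
    calc pathSum (fun i ℓ => dstat π (i - 1) ℓ) p
        = ∑ a ∈ p.toFinset, dstat π (a.1 - 1) a.2 := (List.sum_toFinset _ hnd).symm
      _ = ∑ a ∈ p.toFinset, (Sf a).card := by
          refine Finset.sum_congr rfl fun a ha => ?_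
          have h := hmemge a (List.mem_toFinset.mp ha)
          exact hcard a h.1 h.2
      _ = (p.toFinset.biUnion Sf).card := (Finset.card_biUnion hdisjF).symm
      _ ≤ T0.card := Finset.card_le_card
          (Finset.biUnion_subset.mpr fun a _ => Finset.filter_subset _ _)
      _ = L := by rw [hlam_eq, ← hS0fin.coe_toFinset, Set.ncard_coe_finset]
  by_cases hn : n = 0
  · -- no paths exist; both sides are 0
    subst hn
    have hempty : {v | ∃ p, IsDirPath p (k, 1) (m, 0) ∧
        v = pathSum (fun i ℓ => dstat π (i - 1) ℓ) p} = ∅ := by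
      ext v
      simp only [Set.mem_setOf_eq, Set.mem_empty_iff_false, iff_false, not_exists]
      rintro p ⟨hp, -⟩
      have h2 : (k, 1).1 ≤ (m, 0).1 ∧ (k, 1).2 ≤ (m, 0).2 :=
        dirPath_mem_ge hp (dirPath_last_mem hp)
      exact absurd h2.2 (by norm_num)
    rw [hempty, csSup_empty]
    have hS0e : S0 = ∅ := by
      ext j
      simp only [hS0, Set.mem_setOf_eq, Set.mem_empty_iff_false, iff_false, not_lt]
      exact hent (k - 1) j
    rw [hlam_eq, hS0e, Set.ncard_empty]
    rfl
  · -- construct a path attaining L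
    have hn1 : 1 ≤ n := by omega
    have inv : ∀ t, t ≤ L →
        (k ≤ (seqQ π k L t).1 ∧ (seqQ π k L t).1 ≤ m ∧
          1 ≤ (seqQ π k L t).2 ∧ (seqQ π k L t).2 ≤ n) ∧
        (t < L → (seqQ π k L t).2 ≤ π.entry ((seqQ π k L t).1 - 1) (L - 1 - t)) := by
      intro t
      induction t with
      | zero =>
        intro _
        refine ⟨⟨le_refl k, hkm, le_refl 1, hn1⟩, fun h0 => ?_⟩
        show (1 : ℕ) ≤ π.entry (k - 1) (L - 1 - 0)
        have := hpos (L - 1) (by omega)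
        exact this
      | succ t ih =>
        intro ht1
        obtain ⟨⟨hk', hm', h1', hn'⟩, hB⟩ := ih (by omega)
        obtain ⟨hge, hlt, hval, hsucc⟩ := sSup_spec π hrows h1' (hB (by omega))
        rw [seqQ_succ]
        constructor
        · refine ⟨by simp; omega, by simp; omega, by simp; omega, by simp; exact hent _ _⟩
        · intro hlt2
          have hcc : L - 1 - (t + 1) ≤ L - 1 - t := by omega
          have := hanti_row (sSup {i | (seqQ π k L t).2 ≤ π.entry i (L - 1 - t)}) hcc
          simpa using this
    have mono : ∀ t, t < L →
        (seqQ π k L t).1 ≤ (seqQ π k L (t + 1)).1 ∧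
        (seqQ π k L t).2 ≤ (seqQ π k L (t + 1)).2 := by
      intro t ht
      obtain ⟨⟨hk', hm', h1', hn'⟩, hB⟩ := inv t (by omega)
      obtain ⟨hge, hlt, hval, hsucc⟩ := sSup_spec π hrows h1' (hB ht)
      rw [seqQ_succ]
      exact ⟨by simp; omega, by simp; exact hval⟩
    have desc0 : ∀ t, t < L →
        π.entry ((seqQ π k L (t + 1)).1 - 1) (L - 1 - t) = (seqQ π k L (t + 1)).2 ∧
        π.entry ((seqQ π k L (t + 1)).1) (L - 1 - t) < (seqQ π k L (t + 1)).2 := by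
      intro t ht
      obtain ⟨⟨hk', hm', h1', hn'⟩, hB⟩ := inv t (by omega)
      obtain ⟨hge, hlt, hval, hsucc⟩ := sSup_spec π hrows h1' (hB ht)
      rw [seqQ_succ]
      exact ⟨by simp, by simp; omega⟩
    have desc : ∀ c, c < L →
        π.entry ((seqQ π k L (L - c)).1 - 1) c = (seqQ π k L (L - c)).2 ∧
        π.entry ((seqQ π k L (L - c)).1) c < (seqQ π k L (L - c)).2 := by
      intro c hc
      have hd := desc0 (L - c - 1) (by omega)
      rw [show L - c - 1 + 1 = L - c by omega, show L - 1 - (L - c - 1) = c by omega] at hd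
      exact hd
    obtain ⟨p1, hp1, hmem1⟩ := exists_path_through (seqQ π k L) L mono
    obtain ⟨⟨hkL, hmL, h1L, hnL⟩, -⟩ := inv L (le_refl L)
    obtain ⟨r, hr⟩ := exists_dirPath
      (show (seqQ π k L L).1 ≤ (m, n).1 from hmL)
      (show (seqQ π k L L).2 ≤ (m, n).2 from hnL)
    obtain ⟨hpath, hmem2⟩ := dirPath_append hp1 hr
    have hpath' : IsDirPath (p1 ++ r.tail) (k, 1) (m, n) := by
      rw [← seqQ_zero π k L]; exact hpath
    have hlb : L ≤ pathSum (fun i ℓ => dstat π (i - 1) ℓ) (p1 ++ r.tail) := by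
      have hnd := dirPath_nodup hpath'
      have hmemge : ∀ a ∈ p1 ++ r.tail, k ≤ a.1 ∧ 1 ≤ a.2 :=
        fun a ha => dirPath_mem_ge hpath' ha
      have hsum : pathSum (fun i ℓ => dstat π (i - 1) ℓ) (p1 ++ r.tail)
          = ∑ a ∈ (p1 ++ r.tail).toFinset, dstat π (a.1 - 1) a.2 :=
        (List.sum_toFinset _ hnd).symm
      rw [hsum]
      have hmap : ∀ c ∈ Finset.range L, seqQ π k L (L - c) ∈ (p1 ++ r.tail).toFinset := by
        intro c hc
        rw [Finset.mem_range] at hc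
        exact List.mem_toFinset.mpr
          (List.mem_append.mpr (Or.inl (hmem1 (L - c) (by omega))))
      calc L = (Finset.range L).card := (Finset.card_range L).symm
        _ = ∑ a ∈ (p1 ++ r.tail).toFinset,
              ((Finset.range L).filter fun c => seqQ π k L (L - c) = a).card :=
            Finset.card_eq_sum_card_fiberwise hmap
        _ ≤ ∑ a ∈ (p1 ++ r.tail).toFinset, dstat π (a.1 - 1) a.2 := by
            refine Finset.sum_le_sum fun a ha => ?_
            rw [List.mem_toFinset] at ha
            have hka := hmemge a ha
            rw [hdstat a (by omega),
              ← Set.ncard_coe_finset ((Finset.range L).filter fun c => seqQ π k L (L - c) = a)]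
            refine Set.ncard_le_ncard ?_ (hSfin a hka.1 hka.2)
            intro c hc
            have hc' := Finset.mem_coe.mp hc
            rw [Finset.mem_filter, Finset.mem_range] at hc'
            obtain ⟨hcL, hQc⟩ := hc'
            have hd := desc c hcL
            rw [hQc] at hd
            exact ⟨hd.1, hd.2⟩
    have hVmem : pathSum (fun i ℓ => dstat π (i - 1) ℓ) (p1 ++ r.tail) ∈
        {v | ∃ p, IsDirPath p (k, 1) (m, n) ∧
          v = pathSum (fun i ℓ => dstat π (i - 1) ℓ) p} := ⟨p1 ++ r.tail, hpath', rfl⟩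
    have hbddV : BddAbove {v | ∃ p, IsDirPath p (k, 1) (m, n) ∧
        v = pathSum (fun i ℓ => dstat π (i - 1) ℓ) p} := by
      refine ⟨L, fun v hv => ?_⟩
      obtain ⟨p, hp, rfl⟩ := hv
      exact hub p hp
    have heq : pathSum (fun i ℓ => dstat π (i - 1) ℓ) (p1 ++ r.tail) = L :=
      le_antisymm (hub _ hpath') hlb
    refine le_antisymm (le_csSup hbddV (heq ▸ hVmem)) (csSup_le ⟨_, hVmem⟩ ?_)
    rintro v ⟨p, hp, rfl⟩
    exact hub p hp
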